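/- For lines L₁ and L₂ in ℤ², the following are equivalent: (i) L₁ and L₂ have the same reduction mod 3 (i.e., the mod-3 reductions of primitive generators of L₁ and L₂ span the same one-dimensional subspace of (ℤ/3ℤ)²); (ii) there exists a matrix g ∈ SL(2,ℤ) with g ≡ I (mod 3) or g ≡ −I (mod 3) such that g maps L₁ onto L₂. In other words, the color classes of the mod-3 coloring of the lines in ℤ² are exactly the orbits of the congruence subgroup Γ(3) ≤ PSL(2,ℤ). -/

import Mathlib

/-- A primitive vector of `ℤ²`: coordinates with gcd 1. -/
def Primitive (u : Fin 2 → ℤ) : Prop := Int.gcd (u 0) (u 1) = 1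

/-- A line in `ℤ²`: the set of integer multiples of a primitive vector (equivalently, a
rank-one direct summand). -/
def IsLine (L : Submodule ℤ (Fin 2 → ℤ)) : Prop :=
  ∃ u : Fin 2 → ℤ, Primitive u ∧ L = Submodule.span ℤ {u}

/-- The type of lines in `ℤ²`. -/
abbrev Line := {L : Submodule ℤ (Fin 2 → ℤ) // IsLine L}

/-- `|det(u, v)|` for `u, v ∈ ℤ²`. -/
def detAbs (u v : Fin 2 → ℤ) : ℕ := (u 0 * v 1 - u 1 * v 0).natAbs

/-- Coordinatewise reduction mod 3. -/
def red3 (u : Fin 2 → ℤ) : Fin 2 → ZMod 3 := fun i => ((u i : ℤ) : ZMod 3)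

lemma zmod3_key : ∀ a x b y s r : ZMod 3, a*x+b*y = 1 → s*b - r*a = 1 →
    ∃ κ : ZMod 3, s + κ*a = y ∧ r + κ*b = -x := by decide

lemma exists_entries (a b c d : ℤ) (hu : Int.gcd a b = 1) (hv : Int.gcd c d = 1)
    (h1 : (c : ZMod 3) = a) (h2 : (d : ZMod 3) = b) :
    ∃ α β γ δ : ℤ, α*δ - β*γ = 1 ∧ α*a + β*b = c ∧ γ*a + δ*b = d ∧
      (α : ZMod 3) = 1 ∧ (β : ZMod 3) = 0 ∧ (γ : ZMod 3) = 0 ∧ (δ : ZMod 3) = 1 := by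
  obtain ⟨x, y, hxy⟩ := (Int.isCoprime_iff_gcd_eq_one.mpr hu)
  obtain ⟨p, q, hpq⟩ := (Int.isCoprime_iff_gcd_eq_one.mpr hv)
  have hxy3 : (a : ZMod 3)*(x:ZMod 3) + (b:ZMod 3)*(y:ZMod 3) = 1 := by
    have := congrArg (Int.cast : ℤ → ZMod 3) hxy; push_cast at this; linear_combination this
  have hsr3 : (q : ZMod 3)*(b:ZMod 3) - (-p : ZMod 3)*(a:ZMod 3) = 1 := by
    have := congrArg (Int.cast : ℤ → ZMod 3) hpq; push_cast at this ⊢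
    rw [h1, h2] at this; linear_combination this
  obtain ⟨κ, hκ1, hκ2⟩ := zmod3_key a x b y q (-p) hxy3 hsr3
  have hkc : ((κ.val : ℕ) : ZMod 3) = κ := by rw [ZMod.natCast_val, ZMod.cast_id]
  refine ⟨c*x + (q + κ.val*c)*b, c*y - (q + κ.val*c)*a,
          d*x + (-p + κ.val*d)*b, d*y - (-p + κ.val*d)*a,
          by linear_combination ((q + (κ.val:ℤ)*c)*d - (-p + (κ.val:ℤ)*d)*c) * hxy + hpq,
          by linear_combination c * hxy, by linear_combination d * hxy, ?_, ?_, ?_, ?_⟩ <;>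
  · push_cast
    simp only [h1, h2, hkc]
    first
    | linear_combination hxy3 + (b:ZMod 3) * hκ1
    | linear_combination (-(a : ZMod 3)) * hκ1
    | linear_combination (b : ZMod 3) * hκ2
    | linear_combination hxy3 - (a:ZMod 3) * hκ2

/-- If `u, v` are primitive with the same reduction mod 3, then some `g ∈ Γ(3)` maps
`u` to `v`. -/
lemma exists_SL (u v : Fin 2 → ℤ) (hu : Primitive u) (hv : Primitive v)
    (h : red3 u = red3 v) :
    ∃ g : Matrix.SpecialLinearGroup (Fin 2) ℤ,
      (g : Matrix (Fin 2) (Fin 2) ℤ).map (Int.cast : ℤ → ZMod 3) = 1 ∧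
      (g : Matrix (Fin 2) (Fin 2) ℤ).mulVec u = v := by
  have h0 : ((v 0 : ℤ) : ZMod 3) = ((u 0 : ℤ) : ZMod 3) := (congrFun h 0).symm
  have h1 : ((v 1 : ℤ) : ZMod 3) = ((u 1 : ℤ) : ZMod 3) := (congrFun h 1).symm
  obtain ⟨α, β, γ, δ, hdet, he1, he2, hα, hβ, hγ, hδ⟩ :=
    exists_entries (u 0) (u 1) (v 0) (v 1) hu hv h0 h1
  refine ⟨⟨!![α, β; γ, δ], by simp [Matrix.det_fin_two_of]; linear_combination hdet⟩, ?_, ?_⟩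
  · ext i j
    fin_cases i <;> fin_cases j <;>
      simp [Matrix.map_apply, Matrix.one_apply, hα, hβ, hγ, hδ]
  · funext i
    fin_cases i <;>
      simp [Matrix.mulVec, dotProduct, Fin.sum_univ_two] <;>
      [linear_combination he1; linear_combination he2]

lemma red3_mulVec (M : Matrix (Fin 2) (Fin 2) ℤ) (u : Fin 2 → ℤ) :
    red3 (M.mulVec u) = (M.map (Int.cast : ℤ → ZMod 3)).mulVec (red3 u) := by
  funext i
  simp [red3, Matrix.mulVec, dotProduct, Fin.sum_univ_two, Matrix.map_apply]

lemma primitive_mulVec (g : Matrix.SpecialLinearGroup (Fin 2) ℤ) (u : Fin 2 → ℤ)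
    (hu : Primitive u) : Primitive ((g : Matrix (Fin 2) (Fin 2) ℤ).mulVec u) := by
  set v := (g : Matrix (Fin 2) (Fin 2) ℤ).mulVec u with hv
  have huv : u = ((g⁻¹ : Matrix.SpecialLinearGroup (Fin 2) ℤ) :
      Matrix (Fin 2) (Fin 2) ℤ).mulVec v := by
    rw [hv, Matrix.mulVec_mulVec, ← Matrix.SpecialLinearGroup.coe_mul, inv_mul_cancel]
    simp
  have hdvd : ∀ i, (Int.gcd (v 0) (v 1) : ℤ) ∣ u i := by
    intro i
    rw [huv]
    simp only [Matrix.mulVec, dotProduct, Fin.sum_univ_two]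
    exact dvd_add (Dvd.dvd.mul_left (Int.gcd_dvd_left _ _) _)
      (Dvd.dvd.mul_left (Int.gcd_dvd_right _ _) _)
  have : (Int.gcd (v 0) (v 1) : ℤ) ∣ 1 := by
    have := Int.dvd_coe_gcd (hdvd 0) (hdvd 1)
    rwa [hu] at this
  have : Int.gcd (v 0) (v 1) ∣ 1 := by exact_mod_cast this
  exact Nat.dvd_one.mp this

lemma red3_ne_zero (u : Fin 2 → ℤ) (hu : Primitive u) : red3 u ≠ 0 := by
  intro h
  have h0 : (3 : ℤ) ∣ u 0 := by
    have := congrFun h 0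
    simpa [red3, ZMod.intCast_zmod_eq_zero_iff_dvd] using this
  have h1 : (3 : ℤ) ∣ u 1 := by
    have := congrFun h 1
    simpa [red3, ZMod.intCast_zmod_eq_zero_iff_dvd] using this
  have : (3 : ℤ) ∣ 1 := by
    have := Int.dvd_coe_gcd h0 h1
    rwa [hu] at this
  omega

lemma red3_neg (u : Fin 2 → ℤ) : red3 (-u) = -red3 u := by
  funext i; simp [red3]

lemma primitive_neg (u : Fin 2 → ℤ) (hu : Primitive u) : Primitive (-u) := by
  unfold Primitive at hu ⊢
  simpa using hu

lemma span_neg_singleton (R : Type*) [Ring R] (M : Type*) [AddCommGroup M] [Module R M]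
    (u : M) : Submodule.span R ({-u} : Set M) = Submodule.span R {u} := by
  rw [← Set.neg_singleton, Submodule.span_neg]

/-- Two lines in `ℤ²` have the same reduction mod 3 iff some `g ∈ SL(2,ℤ)` with
`g ≡ ±I (mod 3)` maps one onto the other: the color classes of the mod-3 coloring are
exactly the orbits of the congruence subgroup `Γ(3) ≤ PSL(2,ℤ)`. -/
theorem mod_three_classes_are_Gamma3_orbits (L₁ L₂ : Line) :
    (∃ u v : Fin 2 → ℤ, Primitive u ∧ Primitive v ∧
        L₁.1 = Submodule.span ℤ {u} ∧ L₂.1 = Submodule.span ℤ {v} ∧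
        Submodule.span (ZMod 3) {red3 u} = Submodule.span (ZMod 3) {red3 v}) ↔
    (∃ g : Matrix.SpecialLinearGroup (Fin 2) ℤ,
        ((g : Matrix (Fin 2) (Fin 2) ℤ).map (Int.cast : ℤ → ZMod 3) = 1 ∨
          (g : Matrix (Fin 2) (Fin 2) ℤ).map (Int.cast : ℤ → ZMod 3) = -1) ∧
        L₁.1.map (Matrix.mulVecLin (g : Matrix (Fin 2) (Fin 2) ℤ)) = L₂.1) := by
  constructor
  · rintro ⟨u, v, hu, hv, hL1, hL2, hspan⟩
    have hvmem : red3 v ∈ Submodule.span (ZMod 3) {red3 u} := by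
      rw [hspan]; exact Submodule.mem_span_singleton_self _
    obtain ⟨c, hc⟩ := Submodule.mem_span_singleton.mp hvmem
    have hcne : c ≠ 0 := by
      intro h
      exact red3_ne_zero v hv (by rw [← hc, h, zero_smul])
    have hcases : ∀ c : ZMod 3, c ≠ 0 → c = 1 ∨ c = -1 := by decide
    have hmap : ∀ w : Fin 2 → ℤ, Primitive w → red3 u = red3 w →
        Submodule.span ℤ ({w} : Set (Fin 2 → ℤ)) = Submodule.span ℤ {v} →
        ∃ g : Matrix.SpecialLinearGroup (Fin 2) ℤ,
          ((g : Matrix (Fin 2) (Fin 2) ℤ).map (Int.cast : ℤ → ZMod 3) = 1 ∨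
            (g : Matrix (Fin 2) (Fin 2) ℤ).map (Int.cast : ℤ → ZMod 3) = -1) ∧
          L₁.1.map (Matrix.mulVecLin (g : Matrix (Fin 2) (Fin 2) ℤ)) = L₂.1 := by
      intro w hw hred hw_span
      obtain ⟨g, hg1, hg2⟩ := exists_SL u w hu hw hred
      refine ⟨g, Or.inl hg1, ?_⟩
      rw [hL1, hL2, Submodule.map_span, Set.image_singleton, ← hw_span]
      congr 1
      rw [Matrix.mulVecLin_apply, hg2]
    rcases hcases c hcne with h1 | h1
    · refine hmap v hv ?_ rfl
      rw [← hc, h1, one_smul]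
    · refine hmap (-v) (primitive_neg v hv) ?_ (span_neg_singleton ℤ _ v)
      rw [red3_neg, ← hc, h1, neg_smul, neg_neg, one_smul]
  · rintro ⟨g, hg, hmap⟩
    obtain ⟨u, hu, hL1⟩ := L₁.2
    set v := (g : Matrix (Fin 2) (Fin 2) ℤ).mulVec u with hv
    have hL2 : L₂.1 = Submodule.span ℤ {v} := by
      rw [← hmap, hL1, Submodule.map_span, Set.image_singleton, Matrix.mulVecLin_apply]
    refine ⟨u, v, hu, primitive_mulVec g u hu, hL1, hL2, ?_⟩
    have hred := red3_mulVec (g : Matrix (Fin 2) (Fin 2) ℤ) u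
    rcases hg with h1 | h1
    · rw [h1, Matrix.one_mulVec] at hred
      rw [← hv] at hred
      rw [hred]
    · rw [h1, Matrix.neg_mulVec, Matrix.one_mulVec] at hred
      rw [← hv] at hred
      rw [hred, ← Set.neg_singleton, Submodule.span_neg]
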